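/- Approximation guarantee of the FPTAS scaling step: let l_1 ≥ l_2 ≥ … ≥ l_n > 0 be integer side lengths (extended by 0 beyond n), b a strip width, and ε > 0. Set t = max{ε·l_1/n, 1} and define the scaled instance by w_i = l_i and h_i = ⌈l_i / t⌉ for each i. Let Ā be any layout with W(Ā) ≤ b that minimizes the scaled height H_h among all layouts of width at most b. Then Ā is feasible for the original instance and its original height satisfies H_l(Ā) ≤ (1+ε) · min{ H_l(A) : A a layout with W(A) ≤ b }. -/

import Mathlib

/-- A `p × q` layout: a matrix whose entries are exactly the integers `1, …, p*q`. -/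
def IsLayout (p q : ℕ) (A : Fin p → Fin q → ℕ) : Prop :=
  Function.Injective (fun ij : Fin p × Fin q => A ij.1 ij.2) ∧
  (Set.range fun ij : Fin p × Fin q => A ij.1 ij.2) = Set.Icc 1 (p * q)

/-- Width of a layout with respect to side lengths `l`. -/
def layW (l : ℕ → ℕ) {p q : ℕ} (A : Fin p → Fin q → ℕ) : ℕ :=
  ∑ j : Fin q, Finset.univ.sup fun i : Fin p => l (A i j)

/-- Height of a layout with respect to side lengths `l`. -/
def layH (l : ℕ → ℕ) {p q : ℕ} (A : Fin p → Fin q → ℕ) : ℕ :=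
  ∑ i : Fin p, Finset.univ.sup fun j : Fin q => l (A i j)

lemma aux_sup_le {q : ℕ} [Nonempty (Fin q)] (f g : Fin q → ℕ) (t : ℝ) (ht : 0 ≤ t)
    (hfg : ∀ j, (f j : ℝ) ≤ t * g j) :
    ((Finset.univ.sup f : ℕ) : ℝ) ≤ t * ((Finset.univ.sup g : ℕ) : ℝ) := by
  obtain ⟨j₀, -, hj₀⟩ := Finset.exists_mem_eq_sup Finset.univ Finset.univ_nonempty f
  rw [hj₀]
  refine (hfg j₀).trans (mul_le_mul_of_nonneg_left ?_ ht)
  exact_mod_cast Finset.le_sup (Finset.mem_univ j₀)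

lemma aux_row {q : ℕ} [Nonempty (Fin q)] (v : Fin q → ℕ) (l h : ℕ → ℕ) (n : ℕ) (t : ℝ)
    (hub : ∀ k, t * (h k : ℝ) ≤ (l k : ℝ) + t)
    (hz : ∀ j, n < v j → h (v j) = 0) :
    t * ((Finset.univ.sup fun j => h (v j) : ℕ) : ℝ) ≤
      ((Finset.univ.sup fun j => l (v j) : ℕ) : ℝ) + (if ∃ j, v j ≤ n then t else 0) := by
  classical
  by_cases hex : ∃ j, v j ≤ n
  · rw [if_pos hex]
    obtain ⟨j₀, -, hj₀⟩ :=
      Finset.exists_mem_eq_sup Finset.univ Finset.univ_nonempty (fun j => h (v j))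
    rw [hj₀]
    have h1 : (l (v j₀) : ℝ) ≤ ((Finset.univ.sup fun j => l (v j) : ℕ) : ℝ) := by
      exact_mod_cast Finset.le_sup (f := fun j => l (v j)) (Finset.mem_univ j₀)
    have := hub (v j₀)
    linarith
  · rw [if_neg hex]
    push_neg at hex
    have hsup0 : (Finset.univ.sup fun j => h (v j)) = 0 := by
      refine Nat.le_zero.mp (Finset.sup_le fun j _ => ?_)
      rw [hz j (hex j)]
    rw [hsup0]
    simp only [Nat.cast_zero, mul_zero, add_zero]
    positivity

lemma aux_card {p q n : ℕ} (A : Fin p → Fin q → ℕ)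
    (hinj : Function.Injective fun ij : Fin p × Fin q => A ij.1 ij.2)
    (hone : ∀ i j, 1 ≤ A i j) :
    (Finset.univ.filter fun i : Fin p => ∃ j, A i j ≤ n).card ≤ n := by
  classical
  have hle : (Finset.univ.filter fun i : Fin p => ∃ j, A i j ≤ n).card ≤
      (Finset.Icc 1 n).card := by
    apply Finset.card_le_card_of_injOn
      (fun i => if hi : ∃ j, A i j ≤ n then A i hi.choose else 0)
    · intro i hi
      simp only [Finset.coe_filter, Finset.mem_univ, true_and, Set.mem_setOf_eq] at hi ⊢
      rw [dif_pos hi]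
      exact Finset.mem_Icc.mpr ⟨hone i _, hi.choose_spec⟩
    · intro i hi i' hi' hFF
      simp only [Finset.coe_filter, Finset.mem_univ, true_and, Set.mem_setOf_eq] at hi hi'
      simp only [dif_pos hi, dif_pos hi'] at hFF
      have h2 := hinj (a₁ := (i, hi.choose)) (a₂ := (i', hi'.choose)) hFF
      exact congrArg Prod.fst h2
  simpa using hle

lemma aux_l1 {p q : ℕ} (l : ℕ → ℕ) (A : Fin p → Fin q → ℕ)
    (hA : IsLayout p q A) (hpq : 1 ≤ p * q) : l 1 ≤ layH l A := by
  have h1 : (1 : ℕ) ∈ Set.range fun ij : Fin p × Fin q => A ij.1 ij.2 := by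
    rw [hA.2]; exact Set.mem_Icc.mpr ⟨le_rfl, hpq⟩
  obtain ⟨⟨i, j⟩, hij⟩ := h1
  calc l 1 = l (A i j) := by rw [show A i j = 1 from hij]
    _ ≤ Finset.univ.sup (fun j => l (A i j)) :=
        Finset.le_sup (f := fun j => l (A i j)) (Finset.mem_univ j)
    _ ≤ layH l A := by
        unfold layH
        exact Finset.single_le_sum (f := fun i => Finset.univ.sup fun j => l (A i j))
          (fun _ _ => Nat.zero_le _) (Finset.mem_univ i)

/-- Approximation guarantee of the FPTAS scaling step: if `Ā` is a feasible
layout minimizing the scaled height `H_h` (where `t = max (ε l₁ / n) 1` and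
`h i = ⌈l i / t⌉`) among all feasible layouts, then `Ā` is feasible for the original instance
and `H_l(Ā) ≤ (1 + ε) · H_l(A)` for every feasible layout `A`; in particular
`H_l(Ā) ≤ (1 + ε)` times the optimal height. -/
theorem fptas_scaling_guarantee (n b : ℕ) (hn : 0 < n) (l : ℕ → ℕ)
    (hmono : ∀ a c, 1 ≤ a → a ≤ c → c ≤ n → l c ≤ l a)
    (hpos : ∀ k, 1 ≤ k → k ≤ n → 0 < l k)
    (hzero : ∀ k, n < k → l k = 0)
    (ε : ℝ) (hε : 0 < ε)
    (t : ℝ) (ht : t = max (ε * (l 1) / n) 1)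
    (h : ℕ → ℕ) (hh : ∀ i, h i = (⌈(l i : ℝ) / t⌉).toNat)
    (pb qb : ℕ) (Abar : Fin pb → Fin qb → ℕ)
    (hAbar : IsLayout pb qb Abar) (hpqb : n ≤ pb * qb) (hWb : layW l Abar ≤ b)
    (hmin : ∀ (p q : ℕ) (A : Fin p → Fin q → ℕ),
      n ≤ p * q → IsLayout p q A → layW l A ≤ b → layH h Abar ≤ layH h A) :
    ∀ (p q : ℕ) (A : Fin p → Fin q → ℕ),
      n ≤ p * q → IsLayout p q A → layW l A ≤ b →
      (layH l Abar : ℝ) ≤ (1 + ε) * (layH l A : ℝ) := by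
  classical
  intro p q A hpq hA hWA
  have hpq0 : 0 < p * q := lt_of_lt_of_le hn hpq
  have hpqb0 : 0 < pb * qb := lt_of_lt_of_le hn hpqb
  have hq : 0 < q := Nat.pos_of_ne_zero (by rintro rfl; simp at hpq0)
  have hqb : 0 < qb := Nat.pos_of_ne_zero (by rintro rfl; simp at hpqb0)
  haveI : Nonempty (Fin q) := ⟨⟨0, hq⟩⟩
  haveI : Nonempty (Fin qb) := ⟨⟨0, hqb⟩⟩
  have ht1 : (1 : ℝ) ≤ t := ht ▸ le_max_right _ _
  have ht0 : (0 : ℝ) < t := lt_of_lt_of_le one_pos ht1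
  have hHA0 : (0 : ℝ) ≤ (layH l A : ℝ) := Nat.cast_nonneg _
  -- pointwise bounds
  have hcast : ∀ k : ℕ, (((⌈(l k : ℝ) / t⌉).toNat : ℕ) : ℝ) = (⌈(l k : ℝ) / t⌉ : ℝ) := by
    intro k
    exact_mod_cast Int.toNat_of_nonneg (Int.ceil_nonneg (by positivity))
  have hlow : ∀ k, (l k : ℝ) ≤ t * h k := by
    intro k
    rw [hh k, hcast k]
    have h1 : (l k : ℝ) / t ≤ (⌈(l k : ℝ) / t⌉ : ℝ) := Int.le_ceil _
    have h2 : t * ((l k : ℝ) / t) = (l k : ℝ) := by field_simp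
    nlinarith [mul_le_mul_of_nonneg_left h1 ht0.le]
  have hup : ∀ k, t * ((h k : ℕ) : ℝ) ≤ (l k : ℝ) + t := by
    intro k
    rw [hh k, hcast k]
    have h1 : (⌈(l k : ℝ) / t⌉ : ℝ) < (l k : ℝ) / t + 1 := Int.ceil_lt_add_one _
    have h2 : t * ((l k : ℝ) / t) = (l k : ℝ) := by field_simp
    nlinarith [mul_le_mul_of_nonneg_left h1.le ht0.le]
  have hzeroh : ∀ k, n < k → h k = 0 := by
    intro k hk
    rw [hh k, hzero k hk]
    simp
  rcases max_choice (ε * (l 1) / n) 1 with h1 | h1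
  · -- case t = ε * l 1 / n
    have htv : t = ε * (l 1) / n := by rw [ht, h1]
    have hn' : (n : ℝ) ≠ 0 := Nat.cast_ne_zero.mpr hn.ne'
    have ntε : (n : ℝ) * t = ε * (l 1) := by rw [htv]; field_simp
    have s1 : (layH l Abar : ℝ) ≤ t * (layH h Abar : ℝ) := by
      unfold layH
      push_cast
      rw [Finset.mul_sum]
      exact Finset.sum_le_sum fun i _ =>
        aux_sup_le (fun j => l (Abar i j)) (fun j => h (Abar i j)) t ht0.le fun j => hlow _
    have s2 : t * (layH h Abar : ℝ) ≤ t * (layH h A : ℝ) := by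
      have := hmin p q A hpq hA hWA
      exact mul_le_mul_of_nonneg_left (by exact_mod_cast this) ht0.le
    have hone : ∀ i j, 1 ≤ A i j := by
      intro i j
      have : A i j ∈ Set.Icc 1 (p * q) := hA.2 ▸ ⟨(i, j), rfl⟩
      exact this.1
    have hcardn : ((Finset.univ.filter fun i : Fin p => ∃ j, A i j ≤ n).card : ℝ) ≤ n := by
      exact_mod_cast aux_card A hA.1 hone
    have hsum_ite : (∑ i : Fin p, if ∃ j, A i j ≤ n then t else 0) =
        ((Finset.univ.filter fun i : Fin p => ∃ j, A i j ≤ n).card : ℝ) * t := by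
      rw [← Finset.sum_filter, Finset.sum_const, nsmul_eq_mul]
    have s3 : t * (layH h A : ℝ) ≤ (layH l A : ℝ) + (n : ℝ) * t := by
      calc t * (layH h A : ℝ)
          = ∑ i : Fin p, t * ((Finset.univ.sup fun j => h (A i j) : ℕ) : ℝ) := by
            unfold layH; push_cast; rw [Finset.mul_sum]
        _ ≤ ∑ i : Fin p, (((Finset.univ.sup fun j => l (A i j) : ℕ) : ℝ) +
              if ∃ j, A i j ≤ n then t else 0) :=
            Finset.sum_le_sum fun i _ =>
              aux_row (fun j => A i j) l h n t hup (fun j hj => hzeroh _ hj)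
        _ = (layH l A : ℝ) + ∑ i : Fin p, (if ∃ j, A i j ≤ n then t else 0) := by
            rw [Finset.sum_add_distrib]
            congr 1
            unfold layH
            push_cast
            rfl
        _ ≤ (layH l A : ℝ) + (n : ℝ) * t := by
            rw [hsum_ite]
            have := mul_le_mul_of_nonneg_right hcardn ht0.le
            linarith
    have s4 : ((l 1 : ℕ) : ℝ) ≤ (layH l A : ℝ) := by
      exact_mod_cast aux_l1 l A hA (le_trans hn hpq)
    have s5 : ε * ((l 1 : ℕ) : ℝ) ≤ ε * (layH l A : ℝ) :=
      mul_le_mul_of_nonneg_left s4 hε.le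
    nlinarith [s1, s2, s3, s5, ntε]
  · -- case t = 1
    have htv : t = 1 := by rw [ht, h1]
    have hhl : ∀ k, h k = l k := by
      intro k
      rw [hh k, htv]
      simp
    have hEq : ∀ (r s : ℕ) (B : Fin r → Fin s → ℕ), layH h B = layH l B := by
      intro r s B
      unfold layH
      congr 1
      funext i
      congr 1
      funext j
      rw [hhl]
    have key := hmin p q A hpq hA hWA
    rw [hEq, hEq] at key
    have : (layH l Abar : ℝ) ≤ (layH l A : ℝ) := by exact_mod_cast key
    nlinarith
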